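/- With α a positive solution of Equation (3) and the thresholds u_i, ℓ_i defined from α, for every integer j with 0 ≤ j ≤ k it holds that Σ_{i=1}^j u_i + (k − j)·U + 2β ≤ α·(k·ℓ_{j+1} + 2β). -/
import Mathlib


open Finset

/-- DTPR-min threshold values `u_i`. -/
noncomputable def uMin (U β α : ℝ) (k : ℕ) (i : ℕ) : ℝ :=
  U * (1 - (1 - 1 / α) * (1 + 1 / ((k : ℝ) * α)) ^ (i - 1))
    + 2 * β * (1 / ((k : ℝ) * α) - 1 / (k : ℝ) + 1) * (1 + 1 / ((k : ℝ) * α)) ^ (i - 1)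

/-- DTPR-min threshold values `ℓ_i = u_i - 2β`. -/
noncomputable def lMin (U β α : ℝ) (k : ℕ) (i : ℕ) : ℝ :=
  uMin U β α k i - 2 * β

lemma dtpr_min_key (U β α : ℝ) (k : ℕ) (hk : (k : ℝ) ≠ 0) (hα : α ≠ 0) (j : ℕ) :
    (∑ i ∈ Finset.Icc 1 j, uMin U β α k i) + ((k : ℝ) - (j : ℝ)) * U + 2 * β
      = α * ((k : ℝ) * lMin U β α k (j + 1) + 2 * β) := by
  induction j with
  | zero =>
      simp only [show Finset.Icc 1 0 = ∅ by simp, Finset.sum_empty,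
        lMin, uMin, Nat.cast_zero]
      norm_num
      field_simp
      ring
  | succ j ih =>
      rw [Finset.sum_Icc_succ_top (by omega : 1 ≤ j + 1)]
      have hsum : (∑ i ∈ Finset.Icc 1 j, uMin U β α k i)
          = α * ((k : ℝ) * lMin U β α k (j + 1) + 2 * β)
            - ((k : ℝ) - (j : ℝ)) * U - 2 * β := by linarith
      rw [hsum]
      simp only [lMin, uMin, Nat.add_sub_cancel, Nat.cast_add, Nat.cast_one,
        pow_succ]
      field_simp
      ring

/-- **Lemma 5.1.** For any `0 ≤ j ≤ k`,
`Σ_{i=1}^j u_i + (k − j)·U + 2β ≤ α·(k·ℓ_{j+1} + 2β)`. -/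
theorem dtpr_min_intermediate
    (L U : ℝ) (hL : 0 < L) (hLU : L < U)
    (k : ℕ) (hk : 1 ≤ k)
    (β : ℝ) (hβ : 0 < 2 * β) (hβUL : 2 * β < U - L)
    (α : ℝ) (hα : 0 < α)
    (heq : U - L - 2 * β
      = (U * (1 - 1 / α) - 2 * β * (1 - 1 / (k : ℝ) + 1 / ((k : ℝ) * α)))
          * (1 + 1 / ((k : ℝ) * α)) ^ k)
    (j : ℕ) (hj : j ≤ k) :
    (∑ i ∈ Finset.Icc 1 j, uMin U β α k i) + ((k : ℝ) - (j : ℝ)) * U + 2 * β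
      ≤ α * ((k : ℝ) * lMin U β α k (j + 1) + 2 * β) := by
  have hkR : (k : ℝ) ≠ 0 := by positivity
  exact le_of_eq (dtpr_min_key U β α k hkR hα.ne' j)
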